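/- arXiv:math/0412327 — 8 statements merged into one kernel-verified Lean document; each statement's English description precedes it below -/
import Mathlib

section
/- Let X be a compact Hausdorff abelian topological group and let H be a closed subgroup of X of finite index. Then there exists a sequence u = ⟨u_n : n ∈ ω⟩ of characters of X such that H = s_u(X). (Explicitly, one may take any sequence u : ω → H^⊥ listing each element of the finite annihilator H^⊥ = {φ ∈ X̂ : φ(H) = {0}} infinitely often.) -/
open Filter Topology

/-- The circle group `𝕋 = ℝ/ℤ`. -/
abbrev Torus := AddCircle (1 : ℝ)

/-- The continuous characters of a topological abelian group `X`,
i.e. the continuous homomorphisms `X → 𝕋`. -/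
abbrev GChar (X : Type*) [AddCommGroup X] [TopologicalSpace X] :=
  ContinuousAddMonoidHom X Torus

/-- `sU u = s_u(X) = {x ∈ X : u_n(x) → 0 in 𝕋}`. -/
def sU {X : Type*} [AddCommGroup X] [TopologicalSpace X] (u : ℕ → GChar X) : Set X :=
  {x | Tendsto (fun n => u n x) atTop (𝓝 0)}

/-- `CB B = C_B(X) = {x ∈ X : for every ε > 0, ‖φ(x)‖ < ε for all but finitely
many φ ∈ B}`, where `‖·‖` on `𝕋 = ℝ/ℤ` is the distance to the nearest integer. -/
def CB {X : Type*} [AddCommGroup X] [TopologicalSpace X] (B : Set (GChar X)) : Set X :=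
  {x | ∀ ε > 0, {φ ∈ B | ¬ ‖φ x‖ < ε}.Finite}

/-- The natural embedding of the rational circle `ℚ/ℤ` into the real circle `ℝ/ℤ`. -/
noncomputable def ratToReal : AddCircle (1 : ℚ) →+ Torus :=
  QuotientAddGroup.map _ _ (Rat.castHom ℝ).toAddMonoidHom (by
    intro q hq
    obtain ⟨n, hn⟩ := AddSubgroup.mem_zmultiples_iff.mp hq
    refine AddSubgroup.mem_comap.mpr (AddSubgroup.mem_zmultiples_iff.mpr ⟨n, ?_⟩)
    have : ((n • (1 : ℚ) : ℚ) : ℝ) = (q : ℝ) := by exact_mod_cast congrArg (Rat.cast) hn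
    simpa using this)

lemma ratToReal_injective : Function.Injective ratToReal := by
  rw [injective_iff_map_eq_zero]
  intro a ha
  induction a using QuotientAddGroup.induction_on with
  | H q =>
    have h0 : ((q : ℝ) : Torus) = 0 := ha
    rw [QuotientAddGroup.eq_zero_iff] at h0 ⊢
    obtain ⟨n, hn⟩ := AddSubgroup.mem_zmultiples_iff.mp h0
    have h1 : ((n : ℝ)) = (q : ℝ) := by simpa using hn
    have h2 : q = (n : ℚ) := by exact_mod_cast h1.symm
    rw [h2]; exact AddSubgroup.intCast_mem_zmultiples_one n

/-- Characters into the real circle separate points of any abelian group. -/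
lemma exists_char_ne_zero {G : Type*} [AddCommGroup G] {g : G} (hg : g ≠ 0) :
    ∃ c : G →+ Torus, c g ≠ 0 := by
  obtain ⟨c, hc⟩ := CharacterModule.exists_character_apply_ne_zero_of_ne_zero hg
  refine ⟨ratToReal.comp (show G →+ AddCircle (1 : ℚ) from c), fun h => hc ?_⟩
  have := ratToReal_injective (a₁ := c g) (a₂ := 0) (by rw [map_zero]; exact h)
  simpa using this

/-- Every closed subgroup of finite index in a compact Hausdorff abelian topological
group is of the form `s_u(X)` for some sequence `u` of characters. -/
theorem stmt0 {X : Type*} [AddCommGroup X] [TopologicalSpace X] [IsTopologicalAddGroup X]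
    [CompactSpace X] [T2Space X] (H : AddSubgroup X) (hclosed : IsClosed (H : Set X))
    (hfin : H.FiniteIndex) :
    ∃ u : ℕ → GChar X, (H : Set X) = sU u := by
  haveI := hfin
  have hopen : IsOpen (H : Set X) := H.isOpen_of_isClosed_of_finiteIndex hclosed
  haveI : Finite (X ⧸ H) := AddSubgroup.finite_quotient_of_finiteIndex (H := H)
  -- choose a character of the quotient for each coset, nonzero at that coset when it is nonzero
  have key : ∀ g : X ⧸ H, ∃ c : (X ⧸ H) →+ Torus, g ≠ 0 → c g ≠ 0 := by
    intro g
    by_cases hg : g = 0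
    · exact ⟨0, fun h => absurd hg h⟩
    · obtain ⟨c, hc⟩ := exists_char_ne_zero hg
      exact ⟨c, fun _ => hc⟩
  choose c hc using key
  -- continuity of anything factoring through the (discrete) quotient
  have cont : ∀ f : (X ⧸ H) → Torus, Continuous (fun x : X => f (QuotientAddGroup.mk x)) := by
    intro f
    apply IsLocallyConstant.continuous
    rw [IsLocallyConstant.iff_exists_open]
    intro x
    refine ⟨(fun y => -x + y) ⁻¹' (H : Set X), (continuous_const.add continuous_id).isOpen_preimage _ hopen,
      by simpa using zero_mem H, fun y hy => ?_⟩
    have : (QuotientAddGroup.mk y : X ⧸ H) = QuotientAddGroup.mk x := by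
      rw [QuotientAddGroup.eq]
      simpa using neg_mem (Set.mem_preimage.mp hy)
    rw [this]
  let φ : (X ⧸ H) → GChar X := fun g =>
    { toAddMonoidHom := (c g).comp (QuotientAddGroup.mk' H)
      continuous_toFun := cont (c g) }
  -- enumerate the quotient cyclically
  haveI : Nonempty (X ⧸ H) := ⟨0⟩
  set k := Nat.card (X ⧸ H) with hk
  have hkpos : 0 < k := Nat.card_pos
  let e : Fin k ≃ (X ⧸ H) := (Finite.equivFin (X ⧸ H)).symm
  refine ⟨fun n => φ (e ⟨n % k, Nat.mod_lt _ hkpos⟩), ?_⟩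
  ext x
  constructor
  · intro hx
    have : ∀ n : ℕ, φ (e ⟨n % k, Nat.mod_lt _ hkpos⟩) x = 0 := by
      intro n
      show c _ (QuotientAddGroup.mk x) = 0
      rw [(QuotientAddGroup.eq_zero_iff x).mpr hx, map_zero]
    simpa [sU, this] using tendsto_const_nhds
  · intro hx
    by_contra hxH
    have hg : (QuotientAddGroup.mk x : X ⧸ H) ≠ 0 := fun h =>
      hxH ((QuotientAddGroup.eq_zero_iff x).mp h)
    set g : X ⧸ H := QuotientAddGroup.mk x
    set i : ℕ := (e.symm g : ℕ)
    have hik : i < k := (e.symm g).isLt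
    have hmono : Tendsto (fun m : ℕ => i + m * k) atTop atTop := by
      apply tendsto_atTop_mono (fun m => ?_) tendsto_id
      calc (m : ℕ) = m * 1 := (mul_one m).symm
        _ ≤ m * k := Nat.mul_le_mul_left m hkpos
        _ ≤ i + m * k := Nat.le_add_left _ _
    have hsub := (show Tendsto (fun n => φ (e ⟨n % k, Nat.mod_lt _ hkpos⟩) x) atTop (𝓝 0) from hx).comp hmono
    have heq : ∀ m : ℕ, (fun n => φ (e ⟨n % k, Nat.mod_lt _ hkpos⟩) x) (i + m * k) = c g g := by
      intro m
      have h1 : (i + m * k) % k = i := by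
        rw [Nat.add_mul_mod_self_right, Nat.mod_eq_of_lt hik]
      have h2 : e ⟨(i + m * k) % k, Nat.mod_lt _ hkpos⟩ = g := by
        rw [show (⟨(i + m * k) % k, Nat.mod_lt _ hkpos⟩ : Fin k) = e.symm g from Fin.ext h1]
        simp
      show c _ (QuotientAddGroup.mk x) = c g g
      rw [h2]
    rw [show ((fun n => φ (e ⟨n % k, Nat.mod_lt _ hkpos⟩) x) ∘ fun m => i + m * k)
        = fun _ => c g g from funext heq] at hsub
    exact hc g hg (tendsto_nhds_unique tendsto_const_nhds hsub)
end

section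
/- Let X be a compact Hausdorff abelian topological group, let μ be a Haar measure on X with μ(X) = 1, and let B be a countably infinite subset of X̂. Then μ(C_B(X)) = 0, i.e. C_B(X) is a Haar null set. -/
open Filter Topology

open MeasureTheory in
/-- The integral of a nontrivial character (composed with the exponential) vanishes. -/
lemma integral_char_eq_zero {X : Type*} [AddCommGroup X] [TopologicalSpace X]
    [IsTopologicalAddGroup X] [MeasurableSpace X] [BorelSpace X]
    (μ : Measure X) [μ.IsAddHaarMeasure] [IsFiniteMeasure μ]
    (ψ : GChar X) (hψ : ψ ≠ 0) :
    ∫ x, (AddCircle.toCircle (ψ x) : ℂ) ∂μ = 0 := by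
  obtain ⟨x₀, hx₀⟩ : ∃ x₀, ψ x₀ ≠ 0 := by
    by_contra h
    push_neg at h
    exact hψ (ContinuousAddMonoidHom.ext fun x => h x)
  have key := integral_add_left_eq_self (μ := μ)
    (fun x => (AddCircle.toCircle (ψ x) : ℂ)) x₀
  have hc : ∀ x, (AddCircle.toCircle (ψ (x₀ + x)) : ℂ)
      = (AddCircle.toCircle (ψ x₀) : ℂ) * (AddCircle.toCircle (ψ x) : ℂ) := by
    intro x
    rw [map_add, AddCircle.toCircle_add, Circle.coe_mul]
  simp_rw [hc] at key
  rw [integral_const_mul] at key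
  have hne : (AddCircle.toCircle (ψ x₀) : ℂ) ≠ 1 := by
    intro h
    apply hx₀
    apply AddCircle.injective_toCircle (one_ne_zero)
    rw [AddCircle.toCircle_zero]
    exact Circle.coe_injective (by rw [h, Circle.coe_one])
  have h2 := sub_eq_zero.mpr key
  rw [← sub_one_mul] at h2
  rcases mul_eq_zero.mp h2 with h | h
  · exact absurd (sub_eq_zero.mp h) hne
  · exact h

lemma toCircle_neg' (z : Torus) : AddCircle.toCircle (-z) = (AddCircle.toCircle z)⁻¹ :=
  eq_inv_of_mul_eq_one_left
    (by rw [← AddCircle.toCircle_add, neg_add_cancel, AddCircle.toCircle_zero])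

open MeasureTheory in
/-- For a compact Hausdorff abelian group `X` with normalized Haar measure `μ` and
a countably infinite set `B` of characters, `C_B(X)` is a Haar null set. -/
theorem stmt1 {X : Type*} [AddCommGroup X] [TopologicalSpace X] [IsTopologicalAddGroup X]
    [CompactSpace X] [T2Space X] [MeasurableSpace X] [BorelSpace X]
    (μ : Measure X) [μ.IsAddHaarMeasure] (hμ : μ Set.univ = 1)
    (B : Set (GChar X)) (hBcount : B.Countable) (hBinf : B.Infinite) :
    μ (CB B) = 0 := by
  haveI : IsFiniteMeasure μ := ⟨by rw [hμ]; exact ENNReal.one_lt_top⟩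
  haveI := hBcount.to_subtype
  haveI := hBinf.to_subtype
  obtain ⟨e⟩ : Nonempty (ℕ ≃ B) := nonempty_equiv_of_countable
  set u : ℕ → GChar X := fun n => (e n : GChar X) with hu
  have hu_inj : Function.Injective u := fun a b h => e.injective (Subtype.ext h)
  -- `C_B(X)` is contained in `s_u(X)` for an enumeration `u` of `B`
  have hsub : CB B ⊆ sU u := by
    intro x hx
    simp only [sU, Set.mem_setOf_eq]
    rw [NormedAddCommGroup.tendsto_nhds_zero]
    intro ε hε
    have hfin : {n : ℕ | ¬ ‖u n x‖ < ε}.Finite := by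
      have h1 : {n : ℕ | ¬ ‖u n x‖ < ε} ⊆ u ⁻¹' {φ ∈ B | ¬ ‖φ x‖ < ε} := by
        intro n hn
        exact ⟨(e n).2, hn⟩
      exact ((hx ε hε).preimage (hu_inj.injOn)).subset h1
    have := hfin.eventually_cofinite_notMem
    rw [Nat.cofinite_eq_atTop] at this
    filter_upwards [this] with n hn
    simpa using not_not.mp (fun h => hn h)
  -- measurability of `s_u(X)`
  have hcont : ∀ n, Continuous fun x => u n x := fun n => (u n).continuous
  have hs : MeasurableSet (sU u) := by
    have : sU u = {x | Tendsto (fun n => ‖u n x‖) atTop (𝓝 0)} := by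
      ext x
      simp only [sU, Set.mem_setOf_eq]
      exact tendsto_zero_iff_norm_tendsto_zero
    rw [this]
    exact measurableSet_tendsto (𝓝 0) fun n => ((hcont n).norm.measurable)
  set s := sU u with hsdef
  -- the characters as complex valued functions
  set F : ℕ → X → ℂ := fun n x => (AddCircle.toCircle (u n x) : ℂ) with hF
  have hFcont : ∀ n, Continuous (F n) :=
    fun n => continuous_subtype_val.comp (AddCircle.continuous_toCircle.comp (hcont n))
  have hFnorm : ∀ n x, ‖F n x‖ = 1 := by
    intro n x; simp [hF, Circle.norm_coe]
  have hFmem : ∀ n, MemLp (F n) 2 μ := fun n =>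
    MemLp.of_bound (hFcont n).aestronglyMeasurable 1 (ae_of_all _ fun x => (hFnorm n x).le)
  set v : ℕ → Lp ℂ 2 μ := fun n => (hFmem n).toLp (F n) with hv
  -- orthonormality
  have hinner : ∀ i j, inner ℂ (v i) (v j) = ∫ x, (starRingEnd ℂ) (F i x) * F j x ∂μ := by
    intro i j
    rw [MeasureTheory.L2.inner_def]
    refine integral_congr_ae ?_
    filter_upwards [(hFmem i).coeFn_toLp, (hFmem j).coeFn_toLp] with x hi hj
    rw [hi, hj]
    exact RCLike.inner_apply' _ _
  have hprod : ∀ i j x, (starRingEnd ℂ) (F i x) * F j x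
      = (AddCircle.toCircle ((u j - u i) x) : ℂ) := by
    intro i j x
    have h1 : (u j - u i) x = u j x - u i x := by
      rfl
    rw [h1, sub_eq_add_neg, AddCircle.toCircle_add, toCircle_neg', Circle.coe_mul,
      Circle.coe_inv_eq_conj]
    ring
  have horth : Orthonormal ℂ v := by
    rw [orthonormal_iff_ite]
    intro i j
    rw [hinner]
    by_cases hij : i = j
    · subst hij
      simp only [if_pos rfl]
      have : ∀ x, (starRingEnd ℂ) (F i x) * F i x = 1 := by
        intro x
        rw [hprod, sub_self]
        have h0 : ((0 : GChar X)) x = 0 := rfl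
        rw [h0, AddCircle.toCircle_zero, Circle.coe_one]
      simp_rw [this]
      simp [hμ, Measure.real_def]
    · simp only [if_neg hij]
      simp_rw [hprod]
      have hne : u j - u i ≠ 0 := by
        intro h
        exact hij (hu_inj (sub_eq_zero.mp h)).symm
      exact integral_char_eq_zero μ _ hne
  -- the indicator function of `s` as an `L²` function
  set g : X → ℂ := s.indicator (fun _ => 1) with hg
  have hgmem : MemLp g 2 μ := by
    refine MemLp.of_bound ((measurable_const.indicator hs).aestronglyMeasurable) 1
      (ae_of_all _ fun x => ?_)
    rw [hg]
    by_cases hx : x ∈ s <;> simp [Set.indicator_of_mem, Set.indicator_of_notMem, hx]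
  set w : Lp ℂ 2 μ := hgmem.toLp g with hw
  have hinner2 : ∀ n, inner ℂ w (v n) = ∫ x in s, F n x ∂μ := by
    intro n
    rw [MeasureTheory.L2.inner_def]
    rw [← integral_indicator hs]
    refine integral_congr_ae ?_
    filter_upwards [hgmem.coeFn_toLp, (hFmem n).coeFn_toLp] with x hgx hFx
    rw [hgx, hFx]
    rw [RCLike.inner_apply']
    by_cases hx : x ∈ s
    · simp [hg, Set.indicator_of_mem hx]
    · simp [hg, Set.indicator_of_notMem hx]
  -- Bessel's inequality: the inner products tend to zero
  have hbessel : Tendsto (fun n => inner ℂ w (v n) : ℕ → ℂ) atTop (𝓝 0) := by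
    have hsum := horth.inner_products_summable (x := w)
    have h1 : Tendsto (fun n => ‖(inner ℂ (v n) w : ℂ)‖ ^ 2) atTop (𝓝 0) :=
      hsum.tendsto_atTop_zero
    have h2 : Tendsto (fun n => ‖(inner ℂ (v n) w : ℂ)‖) atTop (𝓝 0) := by
      have := h1.sqrt
      rw [Real.sqrt_zero] at this
      convert this using 2 with n
      rw [Real.sqrt_sq (norm_nonneg _)]
    rw [tendsto_zero_iff_norm_tendsto_zero]
    convert h2 using 2 with n
    rw [← inner_conj_symm (v n) w]
    exact (RCLike.norm_conj _).symm
  -- dominated convergence: the integrals over `s` tend to `μ s`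
  have hdct : Tendsto (fun n => ∫ x in s, F n x ∂μ) atTop (𝓝 ((μ s).toReal : ℂ)) := by
    have h0 : Tendsto (fun n => ∫ x in s, F n x ∂μ) atTop
        (𝓝 (∫ _ in s, (1 : ℂ) ∂μ)) := by
      refine tendsto_integral_of_dominated_convergence (fun _ => (1 : ℝ))
        (fun n => (hFcont n).aestronglyMeasurable.restrict)
        ?_ ?_ ?_
      · exact integrable_const 1
      · exact fun n => ae_of_all _ fun x => (hFnorm n x).le
      · refine (ae_restrict_iff' hs).2 (ae_of_all _ fun x hx => ?_)
        have h1 : Tendsto (fun n => u n x) atTop (𝓝 0) := hx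
        have h2 : Tendsto (fun n => F n x) atTop (𝓝 ((AddCircle.toCircle (0:Torus)) : ℂ)) :=
          (continuous_subtype_val.comp AddCircle.continuous_toCircle).continuousAt.tendsto.comp h1
        simpa using h2
    have h1 : (∫ _ in s, (1 : ℂ) ∂μ) = ((μ s).toReal : ℂ) := by
      rw [integral_const]
      simp [Measure.real_def]
    rwa [h1] at h0
  -- conclude
  have hμs : ((μ s).toReal : ℂ) = 0 := by
    have := tendsto_nhds_unique hdct (by simpa only [hinner2] using hbessel)
    exact this
  have hμs0 : μ s = 0 := by
    have : (μ s).toReal = 0 := by exact_mod_cast hμs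
    exact (ENNReal.toReal_eq_zero_iff _).mp this |>.resolve_right (measure_ne_top μ s)
  exact measure_mono_null hsub hμs0
end

section
/- Let X be a compact Hausdorff abelian topological group and let H be a subgroup of X of infinite index such that H = s_u(X) for some sequence u = ⟨u_n : n ∈ ω⟩ of characters of X. Then there exists a countably infinite set B ⊆ X̂ such that H = C_B(X). -/
open Filter Topology

namespace Stmt2Aux

variable {X : Type*} [AddCommGroup X] [TopologicalSpace X] [IsTopologicalAddGroup X]

/-- Evaluation at a point, as an additive homomorphism on characters. -/
noncomputable def evalHom (x : X) : GChar X →+ Torus where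
  toFun ψ := ψ x
  map_zero' := rfl
  map_add' _ _ := rfl

lemma add_apply (φ ψ : GChar X) (x : X) : (φ + ψ) x = φ x + ψ x := rfl

lemma nsmul_apply (n : ℕ) (ψ : GChar X) (x : X) : (n • ψ) x = n • (ψ x) :=
  (evalHom x).map_nsmul n ψ

lemma torus_zero_of_norm_lt {α : Torus} (h : ∀ ε > 0, ‖α‖ < ε) : α = 0 := by
  by_contra hne
  exact lt_irrefl _ (h _ (norm_pos_iff.mpr hne))

lemma mem_sU_iff (u : ℕ → GChar X) (x : X) :
    x ∈ sU u ↔ ∀ ε > 0, {n : ℕ | ¬ ‖u n x‖ < ε}.Finite := by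
  rw [sU, Set.mem_setOf_eq, NormedAddCommGroup.tendsto_nhds_zero]
  simp only [← Nat.cofinite_eq_atTop, Filter.eventually_cofinite]

lemma torsion_finite {n : ℕ} (hn : 0 < n) : {y : Torus | n • y = 0}.Finite := by
  have hsub : {y : Torus | n • y = 0} ⊆
      ⋃ d ∈ n.divisors, {y : Torus | addOrderOf y = d} := by
    intro y hy
    have h1 : IsOfFinAddOrder y := isOfFinAddOrder_iff_nsmul_eq_zero.mpr ⟨n, hn, hy⟩
    have h2 : addOrderOf y ∣ n := addOrderOf_dvd_of_nsmul_eq_zero hy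
    exact Set.mem_biUnion (Nat.mem_divisors.mpr ⟨h2, hn.ne'⟩) rfl
  exact (Set.Finite.biUnion (Nat.divisors n).finite_toSet fun d hd =>
    AddCircle.finite_setOfPred_addOrderOf_eq (1 : ℝ) (Nat.pos_of_mem_divisors hd)).subset hsub

end Stmt2Aux

open Stmt2Aux in
/-- If `H` is a subgroup of infinite index of a compact Hausdorff abelian group `X`
and `H = s_u(X)` for some sequence of characters `u`, then `H = C_B(X)` for some
countably infinite set `B` of characters.  (In Mathlib, `H.index = 0` expresses
that the index of `H` in `X` is infinite.) -/
theorem stmt2 {X : Type*} [AddCommGroup X] [TopologicalSpace X] [IsTopologicalAddGroup X]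
    [CompactSpace X] [T2Space X] (H : AddSubgroup X) (hinf : H.index = 0)
    (u : ℕ → GChar X) (hu : (H : Set X) = sU u) :
    ∃ B : Set (GChar X), B.Countable ∧ B.Infinite ∧ (H : Set X) = CB B := by
  classical
  set K : Set (GChar X) := {φ | {n | u n = φ}.Infinite} with hKdef
  set R : Set (GChar X) := {φ | (∃ n, u n = φ) ∧ {n | u n = φ}.Finite} with hRdef
  have hRc : R.Countable := Set.Countable.mono (fun φ hφ => hφ.1) (Set.countable_range u)
  have hKc : K.Countable :=
    Set.Countable.mono (fun φ hφ => hφ.nonempty.imp fun n hn => hn) (Set.countable_range u)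
  -- L3 : elements of sU u are killed by every character of K
  have L3 : ∀ x ∈ sU u, ∀ φ ∈ K, φ x = 0 := by
    intro x hx φ hφ
    refine torus_zero_of_norm_lt fun ε hε => ?_
    have hfin := (mem_sU_iff u x).mp hx ε hε
    obtain ⟨n, hn⟩ := (Set.Infinite.diff hφ hfin).nonempty
    have h1 : u n = φ := hn.1
    have h2 : ‖u n x‖ < ε := not_not.mp hn.2
    rwa [h1] at h2
  -- L1 : elements of sU u are "almost killed" by R
  have L1 : ∀ x ∈ sU u, ∀ ε > 0, {φ ∈ R | ¬ ‖φ x‖ < ε}.Finite := by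
    intro x hx ε hε
    have hfin := (mem_sU_iff u x).mp hx ε hε
    set g : GChar X → ℕ := fun φ => if h : ∃ n, u n = φ then h.choose else 0 with hg
    have hgspec : ∀ φ ∈ R, u (g φ) = φ := by
      intro φ hφ
      simp only [hg, dif_pos hφ.1]
      exact hφ.1.choose_spec
    apply Set.Finite.of_finite_image (f := g)
    · apply hfin.subset
      rintro m ⟨φ, hφ, rfl⟩
      have := hgspec φ hφ.1
      simp only [Set.mem_setOf_eq, this]
      exact hφ.2
    · intro φ1 h1 φ2 h2 he
      rw [← hgspec φ1 h1.1, ← hgspec φ2 h2.1, he]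
  -- L2 : converse
  have L2 : ∀ x : X, (∀ ε > 0, {φ ∈ R | ¬ ‖φ x‖ < ε}.Finite) → (∀ φ ∈ K, φ x = 0) →
      x ∈ sU u := by
    intro x h1 h2
    rw [mem_sU_iff]
    intro ε hε
    have hsub : {n | ¬ ‖u n x‖ < ε} ⊆
        ⋃ φ ∈ {φ ∈ R | ¬ ‖φ x‖ < ε}, {n | u n = φ} := by
      intro n hn
      by_cases hf : {m | u m = u n}.Finite
      · exact Set.mem_biUnion (⟨⟨⟨n, rfl⟩, hf⟩, hn⟩ :
          u n ∈ {φ ∈ R | ¬ ‖φ x‖ < ε}) rfl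
      · have hK : u n ∈ K := hf
        exact absurd (by rw [h2 _ hK, norm_zero]; exact hε) hn
    exact ((h1 ε hε).biUnion fun φ hφ => hφ.1.2).subset hsub
  have Hchar : ∀ x : X, x ∈ (H : Set X) ↔
      ((∀ ε > 0, {φ ∈ R | ¬ ‖φ x‖ < ε}.Finite) ∧ ∀ φ ∈ K, φ x = 0) := by
    intro x
    rw [hu]
    exact ⟨fun hx => ⟨L1 x hx, L3 x hx⟩, fun ⟨h1, h2⟩ => L2 x h1 h2⟩
  rcases Set.finite_or_infinite R with hRfin | hRinf
  · -- R finite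
    have hKne : K.Nonempty := by
      by_contra hK0
      have huniv : (Set.univ : Set ℕ) ⊆ ⋃ φ ∈ R, {n | u n = φ} := by
        intro n _
        by_cases hf : {m | u m = u n}.Finite
        · exact Set.mem_biUnion (⟨⟨n, rfl⟩, hf⟩ : u n ∈ R) rfl
        · exact absurd ⟨u n, hf⟩ hK0
      exact Set.infinite_univ ((hRfin.biUnion fun φ hφ => hφ.2).subset huniv)
    have HcharB : ∀ x : X, x ∈ (H : Set X) ↔ ∀ φ ∈ K, φ x = 0 := by
      intro x
      rw [Hchar x]
      exact ⟨fun h => h.2, fun h => ⟨fun ε hε => hRfin.subset fun φ hφ => hφ.1, h⟩⟩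
    rcases Set.finite_or_infinite K with hKfin | hKinf
    · -- K finite : there is a character of infinite order in K
      have hstar : ∃ φ ∈ K, ¬ IsOfFinAddOrder φ := by
        by_contra hall
        push_neg at hall
        have _inst : Finite ↥K := hKfin.to_subtype
        have hidx : ∀ φ : ↥K, (((φ : GChar X).toAddMonoidHom).ker).index ≠ 0 := by
          intro φ
          rw [AddSubgroup.index_ker, Nat.card_ne_zero]
          refine ⟨⟨⟨0, AddSubgroup.zero_mem _⟩⟩, ?_⟩
          have hord := hall φ φ.2
          have hrng : (((φ : GChar X).toAddMonoidHom).range : Set Torus).Finite := by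
            refine (torsion_finite hord.addOrderOf_pos).subset ?_
            rintro y ⟨x, rfl⟩
            show (addOrderOf (φ : GChar X)) • ((φ : GChar X) x) = 0
            rw [← nsmul_apply, addOrderOf_nsmul_eq_zero]
            rfl
          exact hrng.to_subtype
        have hne := AddSubgroup.index_iInf_ne_zero hidx
        have hHeq : H = ⨅ φ : ↥K, ((φ : GChar X).toAddMonoidHom).ker := by
          ext x
          rw [AddSubgroup.mem_iInf]
          constructor
          · intro hx φ
            exact (HcharB x).mp hx _ φ.2
          · intro hx
            exact (HcharB x).mpr fun φ hφ => hx ⟨φ, hφ⟩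
        exact hne (hHeq ▸ hinf)
      obtain ⟨φs, hφsK, hφsord⟩ := hstar
      have hinj : Function.Injective (fun n : ℕ => n • φs) :=
        injective_nsmul_iff_not_isOfFinAddOrder.mpr hφsord
      have hinj2 : ∀ φ : GChar X, Function.Injective (fun k : ℕ => (k + 1) • φs + φ) := by
        intro φ a b hab
        simp only [add_left_inj] at hab
        have := hinj hab
        omega
      set B : Set (GChar X) := {ψ | ∃ k : ℕ, ∃ φ ∈ K, ψ = (k + 1) • φs + φ} with hB
      refine ⟨B, ?_, ?_, ?_⟩
      · -- countable
        have : B ⊆ Set.image2 (fun (k : ℕ) (φ : GChar X) => (k + 1) • φs + φ) Set.univ K := by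
          rintro ψ ⟨k, φ, hφ, rfl⟩
          exact ⟨k, trivial, φ, hφ, rfl⟩
        exact Set.Countable.mono this (Set.Countable.image2 Set.countable_univ hKc _)
      · -- infinite
        exact Set.infinite_of_injective_forall_mem (hinj2 φs)
          fun k => ⟨k, φs, hφsK, rfl⟩
      · ext x
        rw [HcharB x]
        simp only [CB, Set.mem_setOf_eq]
        constructor
        · intro hx ε hε
          refine Set.Finite.subset (Set.finite_empty) ?_
          rintro ψ ⟨⟨k, φ, hφ, rfl⟩, hbad⟩
          exact absurd (by
            rw [Stmt2Aux.add_apply, nsmul_apply, hx _ hφ, hx _ hφsK, smul_zero, add_zero,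
              norm_zero]; exact hε) hbad
        · intro hCB
          -- first : φs x = 0
          have hSfin : ∀ (φ : GChar X), φ ∈ K → ∀ ε > 0,
              {k : ℕ | ¬ ‖((k + 1) • φs + φ) x‖ < ε}.Finite := by
            intro φ hφ ε hε
            apply Set.Finite.of_finite_image (f := fun k => (k + 1) • φs + φ)
            · refine (hCB ε hε).subset ?_
              rintro ψ ⟨k, hk, rfl⟩
              exact ⟨⟨k, φ, hφ, rfl⟩, hk⟩
            · intro a _ b _ hab
              exact hinj2 φ hab
          have hφs0 : φs x = 0 := by
            refine torus_zero_of_norm_lt fun ε hε => ?_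
            have hS := hSfin φs hφsK (ε / 2) (by positivity)
            set S := {k : ℕ | ¬ ‖((k + 1) • φs + φs) x‖ < ε / 2} with hSdef
            have hS' : {k : ℕ | k + 1 ∈ S}.Finite := by
              have : {k : ℕ | k + 1 ∈ S} = (fun k : ℕ => k + 1) ⁻¹' S := rfl
              rw [this]
              exact Set.Finite.preimage (fun a _ b _ h => by omega) hS
            obtain ⟨k, hk⟩ := ((hS.union hS').infinite_compl).nonempty
            simp only [Set.mem_compl_iff, Set.mem_union, not_or] at hk
            have hk1 : ‖((k + 1) • φs + φs) x‖ < ε / 2 := not_not.mp hk.1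
            have hk2 : ‖((k + 2) • φs + φs) x‖ < ε / 2 := by
              have := hk.2
              simp only [Set.mem_setOf_eq, hSdef] at this
              have h22 : k + 1 + 1 = k + 2 := by omega
              rw [h22] at this
              exact not_not.mp this
            have heq : φs x = ((k + 2) • φs + φs) x - ((k + 1) • φs + φs) x := by
              rw [Stmt2Aux.add_apply, Stmt2Aux.add_apply, nsmul_apply, nsmul_apply, succ_nsmul (φs x) (k + 1)]
              abel
            calc ‖φs x‖ = ‖((k + 2) • φs + φs) x - ((k + 1) • φs + φs) x‖ := by rw [← heq]
              _ ≤ ‖((k + 2) • φs + φs) x‖ + ‖((k + 1) • φs + φs) x‖ := norm_sub_le _ _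
              _ < ε := by linarith
          intro φ hφ
          refine torus_zero_of_norm_lt fun ε hε => ?_
          obtain ⟨k, hk⟩ := ((hSfin φ hφ ε hε).infinite_compl).nonempty
          have : ‖((k + 1) • φs + φ) x‖ < ε := not_not.mp hk
          rwa [Stmt2Aux.add_apply, nsmul_apply, hφs0, smul_zero, zero_add] at this
    · -- K infinite
      set B2 : Set (GChar X) := {ψ | ∃ φ1 ∈ K, ∃ φ2 ∈ K, φ1 ≠ φ2 ∧ ψ = φ1 + φ2} with hB2
      have hB2c : B2.Countable := by
        have : B2 ⊆ Set.image2 (· + ·) K K := by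
          rintro ψ ⟨φ1, h1, φ2, h2, _, rfl⟩
          exact ⟨φ1, h1, φ2, h2, rfl⟩
        exact Set.Countable.mono this (Set.Countable.image2 hKc hKc _)
      refine ⟨K ∪ B2, hKc.union hB2c, hKinf.mono Set.subset_union_left, ?_⟩
      ext x
      rw [HcharB x]
      simp only [CB, Set.mem_setOf_eq]
      constructor
      · intro hx ε hε
        refine Set.Finite.subset (Set.finite_empty) ?_
        rintro ψ ⟨hm, hbad⟩
        apply absurd _ hbad
        have hz : ψ x = 0 := by
          rcases hm with hm | ⟨φ1, h1, φ2, h2, _, rfl⟩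
          · exact hx _ hm
          · rw [Stmt2Aux.add_apply, hx _ h1, hx _ h2, add_zero]
        rw [hz, norm_zero]
        exact hε
      · intro hCB φ0 hφ0
        by_contra hne
        have hδ : 0 < ‖φ0 x‖ := norm_pos_iff.mpr hne
        set δ := ‖φ0 x‖ with hδdef
        have hbadfin := hCB (δ / 2) (by positivity)
        set bad := {φ ∈ K ∪ B2 | ¬ ‖φ x‖ < δ / 2} with hbaddef
        have hgood : (K \ (bad ∪ {φ0})).Infinite :=
          hKinf.diff (hbadfin.union (Set.finite_singleton _))
        have himg : ((fun φ => φ0 + φ) '' (K \ (bad ∪ {φ0}))).Infinite :=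
          (Set.infinite_image_iff fun a _ b _ h => by simpa using h).mpr hgood
        have hsub : (fun φ => φ0 + φ) '' (K \ (bad ∪ {φ0})) ⊆ bad := by
          rintro ψ ⟨φ, ⟨hφK, hφn⟩, rfl⟩
          simp only [Set.mem_union, Set.mem_singleton_iff, not_or] at hφn
          have hφg : ‖φ x‖ < δ / 2 := by
            by_contra h
            exact hφn.1 ⟨Or.inl hφK, h⟩
          have hne0 : φ0 ≠ φ := fun h => hφn.2 h.symm
          refine ⟨Or.inr ⟨φ0, hφ0, φ, hφK, hne0, rfl⟩, ?_⟩
          intro hlt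
          have h1 : φ0 x = (φ0 + φ) x - φ x := by rw [Stmt2Aux.add_apply]; abel
          have h2 : δ ≤ ‖(φ0 + φ) x‖ + ‖φ x‖ := by
            calc δ = ‖(φ0 + φ) x - φ x‖ := by rw [← h1]
              _ ≤ _ := norm_sub_le _ _
          linarith
        exact (himg.mono hsub) hbadfin
  · -- R infinite
    by_cases hKe : K = ∅
    · refine ⟨R, hRc, hRinf, ?_⟩
      ext x
      rw [Hchar x]
      simp only [CB, Set.mem_setOf_eq]
      constructor
      · exact fun h => h.1
      · intro hx
        exact ⟨hx, by simp [hKe]⟩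
    · obtain ⟨w, hw⟩ := hKc.exists_eq_range (Set.nonempty_iff_ne_empty.mpr hKe)
      set e := Set.Infinite.natEmbedding R hRinf with he
      set v : ℕ → GChar X := fun k => (e k : GChar X) with hv
      have hvR : ∀ k, v k ∈ R := fun k => (e k).2
      have hvinj : Function.Injective v := fun a b hab =>
        e.injective (Subtype.coe_injective hab)
      have hwK : ∀ j, w j ∈ K := fun j => by rw [hw]; exact ⟨j, rfl⟩
      have hvfin : ∀ x : X, (∀ ε > 0, {φ ∈ R | ¬ ‖φ x‖ < ε}.Finite) →
          ∀ ε > 0, {k : ℕ | ¬ ‖v k x‖ < ε}.Finite := by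
        intro x hx ε hε
        apply Set.Finite.of_finite_image (f := v)
        · refine (hx ε hε).subset ?_
          rintro ψ ⟨k, hk, rfl⟩
          exact ⟨hvR k, hk⟩
        · exact fun a _ b _ hab => hvinj hab
      set B2 : Set (GChar X) := {ψ | ∃ k j : ℕ, j ≤ k ∧ ψ = v k + w j} with hB2
      have hB2c : B2.Countable := by
        have : B2 ⊆ Set.range (fun p : ℕ × ℕ => v p.1 + w p.2) := by
          rintro ψ ⟨k, j, hjk, rfl⟩
          exact ⟨(k, j), rfl⟩
        exact Set.Countable.mono this (Set.countable_range _)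
      refine ⟨R ∪ B2, hRc.union hB2c, hRinf.mono Set.subset_union_left, ?_⟩
      ext x
      rw [Hchar x]
      simp only [CB, Set.mem_setOf_eq]
      constructor
      · rintro ⟨h1, h2⟩ ε hε
        have hkfin := hvfin x h1 ε hε
        have hBsplit : {φ ∈ R ∪ B2 | ¬ ‖φ x‖ < ε} ⊆
            {φ ∈ R | ¬ ‖φ x‖ < ε} ∪
              ⋃ k ∈ {k : ℕ | ¬ ‖v k x‖ < ε}, (fun j => v k + w j) '' Set.Iic k := by
          rintro ψ ⟨hmem | hmem, hbad⟩
          · exact Or.inl ⟨hmem, hbad⟩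
          · obtain ⟨k, j, hjk, rfl⟩ := hmem
            have hwj : w j x = 0 := h2 _ (hwK j)
            have hk : ¬ ‖v k x‖ < ε := by
              rwa [Stmt2Aux.add_apply, hwj, add_zero] at hbad
            exact Or.inr (Set.mem_biUnion hk ⟨j, hjk, rfl⟩)
        exact ((h1 ε hε).union (Set.Finite.biUnion hkfin fun k _ =>
          (Set.finite_Iic k).image _)).subset hBsplit
      · intro hCB
        have h1 : ∀ ε > 0, {φ ∈ R | ¬ ‖φ x‖ < ε}.Finite := by
          intro ε hε
          exact (hCB ε hε).subset fun φ hφ => ⟨Or.inl hφ.1, hφ.2⟩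
        refine ⟨h1, ?_⟩
        intro φ hφ
        obtain ⟨j0, rfl⟩ : ∃ j, w j = φ := by rwa [hw] at hφ
        refine torus_zero_of_norm_lt fun ε hε => ?_
        have hS1 := hvfin x h1 (ε / 2) (by positivity)
        have hS2 : {k : ℕ | j0 ≤ k ∧ ¬ ‖(v k + w j0) x‖ < ε / 2}.Finite := by
          apply Set.Finite.of_finite_image (f := fun k => v k + w j0)
          · refine (hCB (ε / 2) (by positivity)).subset ?_
            rintro ψ ⟨k, hk, rfl⟩
            exact ⟨Or.inr ⟨k, j0, hk.1, rfl⟩, hk.2⟩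
          · intro a _ b _ hab
            exact hvinj (by simpa using hab)
        obtain ⟨k, hk⟩ := (((hS1.union hS2).union (Set.finite_Iio j0)).infinite_compl).nonempty
        rw [Set.mem_compl_iff] at hk
        have hkj0 : j0 ≤ k := not_lt.mp fun h =>
          hk (Set.mem_union_right _ (Set.mem_Iio.mpr h))
        have hk1 : ‖v k x‖ < ε / 2 := not_not.mp fun h =>
          hk (Set.mem_union_left _ (Set.mem_union_left _ h))
        have hk2 : ‖(v k + w j0) x‖ < ε / 2 := not_not.mp fun h =>
          hk (Set.mem_union_left _ (Set.mem_union_right _ ⟨hkj0, h⟩))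
        have heq : w j0 x = (v k + w j0) x - v k x := by rw [Stmt2Aux.add_apply]; abel
        calc ‖w j0 x‖ = ‖(v k + w j0) x - v k x‖ := by rw [← heq]
          _ ≤ ‖(v k + w j0) x‖ + ‖v k x‖ := norm_sub_le _ _
          _ < ε := by linarith
end

section
/- Identify the characters of 𝕋 = ℝ/ℤ with the integers (n acting by x ↦ nx), and let B = {k·n! : n ∈ ω, 0 < k ≤ n}. Then C_B(𝕋) = ℚ/ℤ, the subgroup of rational (equivalently, torsion) points of 𝕋. That is, x ∈ 𝕋 satisfies: for every ε > 0, ‖k·n!·x‖ < ε for all but finitely many pairs (k, n) with 0 < k ≤ n, if and only if x ∈ ℚ/ℤ. -/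
open Filter Topology

/-- `C_B(𝕋)` for a set `B` of integers, identifying the character group of
`𝕋 = ℝ/ℤ` with `ℤ` (with `b ∈ ℤ` acting by `x ↦ bx`). -/
def CBInt (B : Set ℤ) : Set Torus :=
  {x | ∀ ε > 0, {b ∈ B | ¬ ‖b • x‖ < ε}.Finite}

lemma normT (u : ℝ) : ‖((u : ℝ) : Torus)‖ = |u - round u| := by
  rw [AddCircle.norm_eq]; norm_num

lemma coe_smulT (c : ℤ) (t : ℝ) : c • ((t : ℝ) : Torus) = (((c : ℝ) * t : ℝ) : Torus) := by
  rw [← AddCircle.coe_zsmul]; norm_num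

lemma shiftF (u : ℝ) (m : ℤ) : |(u - m) - round (u - m)| = |u - round u| := by
  rw [round_sub_intCast]; push_cast; ring_nf

lemma keyA (n : ℕ) (hn : 1 ≤ n) (d : ℝ) (hr : round d = 0)
    (H : ∀ k : ℕ, 1 ≤ k → k ≤ n → |(k : ℝ) * d - round ((k : ℝ) * d)| < 1/4) :
    |d| < 1/(4*n) := by
  by_contra hc
  push_neg at hc
  have hd1 : |d| < 1/4 := by simpa [hr] using H 1 le_rfl hn
  have hnp : (0:ℝ) < n := by exact_mod_cast hn
  have hdpos : 0 < |d| := lt_of_lt_of_le (by positivity) hc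
  set δ := |d| with hδ
  set k : ℕ := ⌈1/(4*δ)⌉₊ with hk
  have hk1 : 1 ≤ k := Nat.one_le_ceil_iff.mpr (by positivity)
  have hkn : k ≤ n := Nat.ceil_le.mpr (by
    rw [div_le_iff₀ (by positivity)]
    have h1 : (4*(n:ℝ)) * (1/(4*n)) = 1 := by field_simp
    nlinarith [mul_le_mul_of_nonneg_left hc (by positivity : (0:ℝ) ≤ 4*n)])
  have hlow : 1/4 ≤ (k:ℝ) * δ := by
    have := Nat.le_ceil (1/(4*δ))
    rw [← hk] at this
    have := mul_le_mul_of_nonneg_right this (le_of_lt hdpos)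
    calc (1:ℝ)/4 = 1/(4*δ) * δ := by field_simp
    _ ≤ k * δ := this
  have hhigh : (k:ℝ) * δ < 1/2 := by
    have := Nat.ceil_lt_add_one (a := 1/(4*δ)) (by positivity)
    rw [← hk] at this
    have h2 := mul_lt_mul_of_pos_right this hdpos
    have : (1/(4*δ) + 1) * δ = 1/4 + δ := by field_simp
    nlinarith
  have habs : |(k:ℝ) * d| = (k:ℝ) * δ := by
    rw [abs_mul, Nat.abs_cast]
  have hr0 : round ((k:ℝ) * d) = 0 := by
    rw [round_eq_zero_iff]
    constructor
    · nlinarith [neg_abs_le ((k:ℝ)*d), habs]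
    · nlinarith [le_abs_self ((k:ℝ)*d), habs]
  have := H k hk1 hkn
  rw [hr0] at this
  simp at this
  nlinarith

/-- For `B = {k·n! : 0 < k ≤ n}`, the set `C_B(𝕋)` is exactly `ℚ/ℤ`, the subgroup
of rational (equivalently, torsion) points of `𝕋`. -/
theorem stmt3 :
    CBInt {m : ℤ | ∃ n k : ℕ, 0 < k ∧ k ≤ n ∧ m = k * n.factorial} =
      {x : Torus | ∃ n : ℕ, 0 < n ∧ n • x = 0} := by
  ext x
  simp only [CBInt, Set.mem_setOf_eq]
  constructor
  · intro h
    obtain ⟨t, rfl⟩ := QuotientAddGroup.mk_surjective x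
    set g : ℕ → ℝ := fun n => n.factorial * t - round ((n.factorial : ℝ) * t) with hg
    have hground : ∀ n, round (g n) = 0 := by
      intro n; simp [hg, round_sub_intCast]
    have hnorm : ∀ c : ℤ, ‖c • ((t : ℝ) : Torus)‖ = |(c:ℝ)*t - round ((c:ℝ)*t)| := by
      intro c; rw [coe_smulT, normT]
    obtain ⟨M, hM⟩ := (h (1/4) (by norm_num)).bddAbove
    set N : ℕ := max 1 (M.toNat + 1) with hN
    have hN1 : 1 ≤ N := le_max_left _ _
    have hNM : M < (N.factorial : ℤ) := by
      have h1 : N ≤ N.factorial := Nat.self_le_factorial N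
      have h2 : M.toNat + 1 ≤ N := le_max_right _ _
      have h3 : M ≤ M.toNat := Int.self_le_toNat M
      omega
    have key : ∀ n, N ≤ n → ∀ k : ℕ, 1 ≤ k → k ≤ n →
        |(k:ℝ) * g n - round ((k:ℝ) * g n)| < 1/4 := by
      intro n hn k hk1 hkn
      set b : ℤ := ((k * n.factorial : ℕ) : ℤ) with hb
      have hbB : b ∈ {m : ℤ | ∃ n k : ℕ, 0 < k ∧ k ≤ n ∧ m = k * n.factorial} :=
        ⟨n, k, hk1, hkn, by push_cast [hb]; ring⟩
      have hbig : M < b := by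
        have h1 : N.factorial ≤ n.factorial := Nat.factorial_le hn
        have h2 : n.factorial ≤ k * n.factorial := Nat.le_mul_of_pos_left _ hk1
        have : N.factorial ≤ k * n.factorial := le_trans h1 h2
        calc M < (N.factorial : ℤ) := hNM
        _ ≤ ((k * n.factorial : ℕ) : ℤ) := by exact_mod_cast this
      have hbS : b ∉ {b ∈ {m : ℤ | ∃ n k : ℕ, 0 < k ∧ k ≤ n ∧ m = k * n.factorial} |
          ¬ ‖b • ((t:ℝ) : Torus)‖ < 1/4} := fun hmem => absurd (hM hmem) (not_le.mpr hbig)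
      have hlt : ‖b • ((t:ℝ) : Torus)‖ < 1/4 := by
        by_contra hcon
        exact hbS ⟨hbB, hcon⟩
      rw [hnorm] at hlt
      have heq : (k:ℝ) * g n = (b:ℝ)*t - (k * round ((n.factorial:ℝ)*t) : ℤ) := by
        simp only [hg]; push_cast [hb]; ring
      rw [heq, shiftF]
      exact hlt
    have hsmall : ∀ n, N ≤ n → |g n| < 1/(4*n) :=
      fun n hn => keyA n (le_trans hN1 hn) (g n) (hground n) (key n hn)
    have hrec : ∀ n, N ≤ n → g (n+1) = (n+1) * g n := by
      intro n hn
      set m : ℤ := round (((n+1).factorial : ℝ) * t) - (n+1) * round ((n.factorial : ℝ)*t) with hm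
      have heq : ((n:ℝ)+1) * g n - g (n+1) = (m:ℝ) := by
        simp only [hg, hm]; push_cast [Nat.factorial_succ]; ring
      have hnp : (1:ℝ) ≤ n := by exact_mod_cast le_trans hN1 hn
      have ha := hsmall n hn
      have hb2 := hsmall (n+1) (by omega)
      have habs : |(m:ℝ)| < 1 := by
        rw [← heq]
        have h1 : |((n:ℝ)+1) * g n - g (n+1)| ≤ ((n:ℝ)+1) * |g n| + |g (n+1)| := by
          calc |((n:ℝ)+1) * g n - g (n+1)| ≤ |((n:ℝ)+1) * g n| + |g (n+1)| := abs_sub _ _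
          _ = ((n:ℝ)+1) * |g n| + |g (n+1)| := by
              rw [abs_mul, abs_of_nonneg (by linarith : (0:ℝ) ≤ (n:ℝ)+1)]
        have h2 : ((n:ℝ)+1) * |g n| < ((n:ℝ)+1) / (4*n) := by
          apply (mul_lt_mul_of_pos_left ha (by linarith : (0:ℝ) < (n:ℝ)+1)).trans_le
          rw [mul_one_div]
        have h3 : ((n:ℝ)+1) / (4*n) ≤ 1/2 := by
          rw [div_le_div_iff₀ (by linarith) (by norm_num)]
          linarith
        have h4 : |g (n+1)| < 1/4 := by
          apply hb2.trans_le
          rw [div_le_div_iff₀ (by positivity) (by norm_num)]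
          push_cast; linarith
        linarith
      have hm0 : m = 0 := by
        have h5 : -1 < (m:ℝ) ∧ (m:ℝ) < 1 := abs_lt.mp habs
        have h6 : -1 < m ∧ m < 1 := by exact_mod_cast h5
        omega
      rw [hm0] at heq
      push_cast at heq
      linarith
    have hfac : ∀ n, N ≤ n → (N.factorial : ℝ) * g n = (n.factorial : ℝ) * g N := by
      intro n hn
      induction n, hn using Nat.le_induction with
      | base => rfl
      | succ n hn ih =>
        rw [hrec n hn, Nat.factorial_succ]
        push_cast
        nlinarith [ih]
    refine ⟨N.factorial, Nat.factorial_pos N, ?_⟩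
    have hgN : g N = 0 := by
      by_contra hne
      have hc : 0 < |g N| := abs_pos.mpr hne
      set c := |g N| with hcdef
      set m : ℕ := max N (⌈(N.factorial : ℝ)/(4*c)⌉₊ + 1) with hmdef
      have hmN : N ≤ m := le_max_left _ _
      have hm1 : 1 ≤ m := le_trans hN1 hmN
      have hmgt : (N.factorial : ℝ)/(4*c) < m := by
        have h1 : ⌈(N.factorial : ℝ)/(4*c)⌉₊ + 1 ≤ m := le_max_right _ _
        have h2 := Nat.le_ceil ((N.factorial : ℝ)/(4*c))
        have h3 : (⌈(N.factorial : ℝ)/(4*c)⌉₊ : ℝ) + 1 ≤ m := by exact_mod_cast h1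
        linarith
      have heq := hfac m hmN
      have hgm := hsmall m hmN
      have hmp : (0:ℝ) < m := by exact_mod_cast hm1
      have habs : (N.factorial : ℝ) * |g m| = (m.factorial : ℝ) * c := by
        rw [hcdef, ← abs_of_nonneg (by positivity : (0:ℝ) ≤ (N.factorial : ℝ)),
          ← abs_mul, heq, abs_mul, abs_of_nonneg (by positivity : (0:ℝ) ≤ (m.factorial : ℝ))]
      have hfact1 : (1:ℝ) ≤ (m.factorial : ℝ) := by exact_mod_cast Nat.one_le_iff_ne_zero.mpr (Nat.factorial_ne_zero m)
      have hNf : (0:ℝ) < (N.factorial : ℝ) := by positivity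
      -- m! * c = N! * |g m| < N! / (4m), and N! < 4*m*c, so m! * c < c, so m! < 1: contradiction
      have h7 : (N.factorial : ℝ) < 4 * m * c := by
        rw [div_lt_iff₀ (by positivity)] at hmgt
        linarith [hmgt]
      have h8 : (m.factorial : ℝ) * c < (N.factorial : ℝ) * (1/(4*m)) := by
        rw [← habs]
        exact mul_lt_mul_of_pos_left hgm hNf
      have h9 : (N.factorial : ℝ) * (1/(4*m)) < (4*m*c) * (1/(4*m)) := by
        apply mul_lt_mul_of_pos_right h7 (by positivity)
      have h10 : (4*(m:ℝ)*c) * (1/(4*m)) = c := by field_simp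
      nlinarith
    have : (N.factorial : ℝ) * t = ((round ((N.factorial : ℝ) * t) : ℤ) : ℝ) := by
      have := hgN
      simp only [hg] at this
      linarith
    rw [show (N.factorial • ((t:ℝ) : Torus)) = (((N.factorial : ℝ) * t : ℝ) : Torus) by
      rw [← AddCircle.coe_nsmul]; norm_num]
    rw [this, AddCircle.coe_eq_zero_iff]
    exact ⟨round ((N.factorial : ℝ) * t), by simp⟩
  · rintro ⟨n, hn, hx⟩ ε hε
    apply Set.Finite.subset (Set.finite_Icc (0:ℤ) (n * n.factorial))
    rintro b ⟨⟨m, k, hk1, hkm, hbe⟩, hbad⟩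
    have hmn : m < n := by
      by_contra hge
      push_neg at hge
      have hd : (n : ℕ) ∣ k * m.factorial :=
        Dvd.dvd.mul_left (Nat.dvd_factorial hn hge) k
      obtain ⟨c, hc⟩ := hd
      have hbz : b • x = 0 := by
        have : b = (n : ℤ) * (c : ℤ) := by rw [hbe]; exact_mod_cast congrArg (Nat.cast (R := ℤ)) hc
        have h0 : (n : ℤ) • x = 0 := by rw [natCast_zsmul]; exact hx
        rw [this, mul_comm, mul_smul, h0, smul_zero]
      apply hbad
      rw [hbz, norm_zero]
      exact hε
    constructor
    · rw [hbe]; positivity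
    · rw [hbe]
      have h1 : k * m.factorial ≤ n * n.factorial :=
        Nat.mul_le_mul (le_trans hkm (le_of_lt hmn)) (Nat.factorial_le (le_of_lt hmn))
      exact_mod_cast h1
end

section
/- Let (X, d) be a metric space, F a countably infinite subset of X, and ⟨F_n : n ∈ ω⟩ a sequence of finite subsets of X with F_n ⊆ F_{n+1} for all n and ⋃_n F_n = F. Then there exists a strictly decreasing sequence of positive reals ε_n converging to 0 such that for every x ∉ F there are infinitely many n with d(x, y) ≥ ε_n for all y ∈ F_n (i.e. x lies outside the ε_n-neighborhood of F_n). -/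
open Filter Topology

/-- Let `(X, d)` be a metric space, `F` a countably infinite subset of `X`, and
`Fₙ` finite sets increasing to `F`.  Then there are positive reals `εₙ` strictly
decreasing to `0` such that every `x ∉ F` lies outside the `εₙ`-neighborhood of
`Fₙ` for infinitely many `n`. -/
theorem stmt13 {X : Type*} [MetricSpace X] (F : Set X)
    (hFcount : F.Countable) (hFinf : F.Infinite)
    (Fn : ℕ → Set X) (hfin : ∀ n, (Fn n).Finite) (hmono : ∀ n, Fn n ⊆ Fn (n + 1))
    (hunion : ⋃ n, Fn n = F) :
    ∃ ε : ℕ → ℝ, StrictAnti ε ∧ (∀ n, 0 < ε n) ∧ Tendsto ε atTop (𝓝 0) ∧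
      ∀ x ∉ F, {n | ∀ y ∈ Fn n, ε n ≤ dist x y}.Infinite := by
  classical
  -- δ k : a positive lower bound on distances between distinct points of Fn k
  have hδ : ∀ k : ℕ, ∃ δ : ℝ, 0 < δ ∧
      ∀ a ∈ Fn k, ∀ b ∈ Fn k, a ≠ b → δ ≤ dist a b := by
    intro k
    set s := (hfin k).toFinset with hs
    set t := (s ×ˢ s).filter (fun p => p.1 ≠ p.2) with ht
    by_cases hne : t.Nonempty
    · refine ⟨t.inf' hne (fun p => dist p.1 p.2), ?_, ?_⟩
      · rw [Finset.lt_inf'_iff]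
        intro p hp
        rw [ht, Finset.mem_filter] at hp
        exact dist_pos.mpr hp.2
      · intro a ha b hb hab
        have hpt : (a, b) ∈ t := by
          rw [ht, Finset.mem_filter, Finset.mem_product]
          exact ⟨⟨(hfin k).mem_toFinset.mpr ha, (hfin k).mem_toFinset.mpr hb⟩, hab⟩
        exact Finset.inf'_le _ hpt
    · refine ⟨1, one_pos, ?_⟩
      intro a ha b hb hab
      exact absurd ⟨(a, b), by
        rw [ht, Finset.mem_filter, Finset.mem_product]
        exact ⟨⟨(hfin k).mem_toFinset.mpr ha, (hfin k).mem_toFinset.mpr hb⟩, hab⟩⟩ hne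
  choose δ hδpos hδle using hδ
  set a : ℕ → ℝ := fun n => min ((1/2 : ℝ) ^ n) (δ (n + 1) / 3) with ha
  have hapos : ∀ n, 0 < a n := fun n =>
    lt_min (pow_pos (by norm_num) n) (by linarith [hδpos (n + 1)])
  set m : ℕ → ℝ := fun n => (Finset.range (n + 1)).inf' ⟨0, by simp⟩ a with hm
  have hmpos : ∀ n, 0 < m n := by
    intro n
    rw [hm]
    refine (Finset.lt_inf'_iff (H := _)).mpr ?_
    intro k _
    exact hapos k
  have hmle : ∀ n, m n ≤ a n := fun n =>
    Finset.inf'_le _ (Finset.mem_range.mpr (Nat.lt_succ_self n))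
  have hmanti : ∀ n, m (n + 1) ≤ m n := by
    intro n
    rw [hm]
    apply Finset.le_inf'
    intro k hk
    exact Finset.inf'_le _ (Finset.mem_range.mpr (Nat.lt_succ_of_lt (Finset.mem_range.mp hk)))
  set c : ℕ → ℝ := fun n => 1/2 + (1/2 : ℝ) ^ (n + 1) with hc
  have hcpos : ∀ n, 0 < c n := fun n => by positivity
  have hcle : ∀ n, c n ≤ 1 := by
    intro n
    have : (1/2 : ℝ) ^ (n + 1) ≤ (1/2 : ℝ) ^ 1 :=
      pow_le_pow_of_le_one (by norm_num) (by norm_num) (Nat.le_add_left 1 n)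
    simp only [hc]
    linarith [this]
  have hcstrict : ∀ n, c (n + 1) < c n := by
    intro n
    simp only [hc]
    have : (1/2 : ℝ) ^ (n + 2) < (1/2 : ℝ) ^ (n + 1) :=
      pow_lt_pow_right_of_lt_one₀ (by norm_num) (by norm_num) (by omega)
    linarith
  refine ⟨fun n => m n * c n, ?_, ?_, ?_, ?_⟩
  · apply strictAnti_nat_of_succ_lt
    intro n
    calc m (n + 1) * c (n + 1) ≤ m n * c (n + 1) :=
          mul_le_mul_of_nonneg_right (hmanti n) (hcpos (n + 1)).le
      _ < m n * c n := by
          exact mul_lt_mul_of_pos_left (hcstrict n) (hmpos n)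
  · exact fun n => mul_pos (hmpos n) (hcpos n)
  · apply squeeze_zero (fun n => (mul_pos (hmpos n) (hcpos n)).le)
      (g := fun n => (1/2 : ℝ) ^ n)
    · intro n
      calc m n * c n ≤ m n * 1 :=
            mul_le_mul_of_nonneg_left (hcle n) (hmpos n).le
        _ = m n := mul_one _
        _ ≤ a n := hmle n
        _ ≤ (1/2 : ℝ) ^ n := min_le_left _ _
    · exact tendsto_pow_atTop_nhds_zero_of_lt_one (by norm_num) (by norm_num)
  · -- main part
    intro x hx
    set ε : ℕ → ℝ := fun n => m n * c n with hε
    have hεanti : ∀ n, ε (n + 1) ≤ ε n := by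
      intro n
      calc m (n + 1) * c (n + 1) ≤ m n * c (n + 1) :=
            mul_le_mul_of_nonneg_right (hmanti n) (hcpos (n + 1)).le
        _ ≤ m n * c n := mul_le_mul_of_nonneg_left (hcstrict n).le (hmpos n).le
    have hεδ : ∀ n, ε n ≤ δ (n + 1) / 3 := by
      intro n
      calc m n * c n ≤ m n * 1 := mul_le_mul_of_nonneg_left (hcle n) (hmpos n).le
        _ = m n := mul_one _
        _ ≤ a n := hmle n
        _ ≤ δ (n + 1) / 3 := min_le_right _ _
    by_contra hcon
    rw [Set.not_infinite] at hcon
    obtain ⟨N, hN⟩ := hcon.bddAbove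
    have key : ∀ n : ℕ, ∃ y, y ∈ Fn (N + 1 + n) ∧ dist x y < ε (N + 1 + n) := by
      intro n
      have hnot : (N + 1 + n) ∉ {n | ∀ y ∈ Fn n, ε n ≤ dist x y} := by
        intro hmem
        have := hN hmem
        omega
      simp only [Set.mem_setOf_eq, not_forall] at hnot
      obtain ⟨y, hy, hyd⟩ := hnot
      exact ⟨y, hy, lt_of_not_ge hyd⟩
    choose y hy1 hy2 using key
    have hconst : ∀ n, y n = y 0 := by
      intro n
      induction n with
      | zero => rfl
      | succ k ih =>
        rw [← ih]
        by_contra hne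
        have h1 : y k ∈ Fn (N + 1 + k + 1) := hmono _ (hy1 k)
        have h2 : y (k + 1) ∈ Fn (N + 1 + k + 1) := hy1 (k + 1)
        have hd := hδle (N + 1 + k + 1) _ h2 _ h1 hne
        have htri : dist (y (k+1)) (y k) ≤ dist x (y (k+1)) + dist x (y k) := by
          rw [dist_comm x (y (k+1))]
          exact dist_triangle _ _ _
        have hε1 : dist x (y k) < ε (N + 1 + k) := hy2 k
        have hε2 : dist x (y (k + 1)) < ε (N + 1 + k) :=
          lt_of_lt_of_le (hy2 (k + 1)) (hεanti _)
        have hδ3 : ε (N + 1 + k) ≤ δ (N + 1 + k + 1) / 3 := hεδ _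
        have hδp := hδpos (N + 1 + k + 1)
        linarith
    -- now dist x (y 0) < ε (N+1+n) for all n, and ε → 0
    have hd0 : ∀ n, dist x (y 0) < ε (N + 1 + n) := by
      intro n
      rw [← hconst n]
      exact hy2 n
    have h0 : Tendsto ε atTop (𝓝 0) := by
      apply squeeze_zero (fun n => (mul_pos (hmpos n) (hcpos n)).le)
        (g := fun n => (1/2 : ℝ) ^ n)
      · intro n
        calc m n * c n ≤ m n * 1 :=
              mul_le_mul_of_nonneg_left (hcle n) (hmpos n).le
          _ = m n := mul_one _
          _ ≤ a n := hmle n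
          _ ≤ (1/2 : ℝ) ^ n := min_le_left _ _
      · exact tendsto_pow_atTop_nhds_zero_of_lt_one (by norm_num) (by norm_num)
    have hεanti2 : Antitone ε := antitone_nat_of_succ_le hεanti
    have hd0b : ∀ n, dist x (y 0) ≤ ε n := fun n =>
      le_trans (hd0 n).le (hεanti2 (by omega : n ≤ N + 1 + n))
    have hdle : dist x (y 0) ≤ 0 := ge_of_tendsto' h0 hd0b
    have hxy : x = y 0 := by
      have := dist_nonneg (x := x) (y := y 0)
      have : dist x (y 0) = 0 := le_antisymm hdle this
      exact dist_eq_zero.mp this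
    apply hx
    rw [← hunion]
    exact Set.mem_iUnion.mpr ⟨N + 1 + 0, hxy ▸ hy1 0⟩
end

section
/- Let X be a compact Hausdorff abelian topological group, F a closed subgroup of X, and B a countably infinite subset of X̂. Then F ⊆ C_B(X) if and only if F ⊆ ker(φ) for all but finitely many φ ∈ B. -/
open Filter Topology

section Aux
open MeasureTheory Set

lemma re_toCircle_ge {z : Torus} (hz : ‖z‖ < 1/8) :
    (1/2 : ℝ) ≤ ((AddCircle.toCircle z : Circle) : ℂ).re := by
  induction z using QuotientAddGroup.induction_on with
  | H x =>
    have hxy : ((x - round x : ℝ) : Torus) = (x : Torus) := by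
      have h0 : ((round x : ℝ) : Torus) = 0 := by
        rw [AddCircle.coe_eq_zero_iff]
        exact ⟨round x, by simp⟩
      rw [QuotientAddGroup.mk_sub, h0, sub_zero]
    rw [UnitAddCircle.norm_eq] at hz
    set y : ℝ := x - round x with hy
    rw [← hxy, AddCircle.toCircle_apply_mk, Circle.coe_exp]
    have hre : (Complex.exp ((2 * Real.pi / 1 * y : ℝ) * Complex.I)).re
        = Real.cos (2 * Real.pi / 1 * y) := by
      rw [Complex.exp_ofReal_mul_I_re]
    rw [hre]
    have hcos := Real.one_sub_sq_div_two_le_cos (x := 2 * Real.pi / 1 * y)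
    have hpi : Real.pi < 3.15 := Real.pi_lt_d2
    have hpi0 : 0 < Real.pi := Real.pi_pos
    have hyabs : |y| < 1/8 := hz
    have h1 : |2 * Real.pi / 1 * y| < 2 * 3.15 / 8 := by
      rw [abs_mul]
      have : |2 * Real.pi / 1| = 2 * Real.pi := by
        rw [abs_of_pos]; ring_nf; positivity
      rw [this]
      nlinarith [abs_nonneg y]
    nlinarith [abs_nonneg (2 * Real.pi / 1 * y), sq_abs (2 * Real.pi / 1 * y)]

variable {G : Type*} [AddCommGroup G] [TopologicalSpace G] [IsTopologicalAddGroup G]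
  [CompactSpace G] [T2Space G] [MeasurableSpace G] [BorelSpace G]

lemma integral_char_zero (μ : Measure G) [IsFiniteMeasure μ] [μ.IsAddLeftInvariant]
    (χ : ContinuousAddMonoidHom G Torus) (hχ : ∃ g, χ g ≠ 0) :
    ∫ x, ((AddCircle.toCircle (χ x) : Circle) : ℂ) ∂μ = 0 := by
  obtain ⟨g, hg⟩ := hχ
  have h := integral_add_left_eq_self (μ := μ)
    (fun x => ((AddCircle.toCircle (χ x) : Circle) : ℂ)) g
  have heq : ∀ x, ((AddCircle.toCircle (χ (g + x)) : Circle) : ℂ)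
      = ((AddCircle.toCircle (χ g) : Circle) : ℂ) * ((AddCircle.toCircle (χ x) : Circle) : ℂ) := by
    intro x
    rw [map_add, AddCircle.toCircle_add]
    push_cast
    ring
  simp only [heq] at h
  rw [integral_const_mul] at h
  have hc : ((AddCircle.toCircle (χ g) : Circle) : ℂ) ≠ 1 := by
    intro hcon
    apply hg
    apply AddCircle.injective_toCircle (one_ne_zero)
    rw [AddCircle.toCircle_zero]
    exact Subtype.ext hcon
  have h2 : (((AddCircle.toCircle (χ g) : Circle) : ℂ) - 1)
      * ∫ x, ((AddCircle.toCircle (χ x) : Circle) : ℂ) ∂μ = 0 := by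
    rw [sub_mul, h, one_mul, sub_self]
  rcases mul_eq_zero.mp h2 with h3 | h3
  · exact absurd (by linear_combination h3) hc
  · exact h3

lemma measure_bad_ge (μ : Measure G) [IsProbabilityMeasure μ] [μ.IsAddLeftInvariant]
    (χ : ContinuousAddMonoidHom G Torus) (hχ : ∃ g, χ g ≠ 0) :
    ENNReal.ofReal (1/3) ≤ μ {x | ¬ ‖χ x‖ < 1/8} := by
  set A : Set G := {x | ¬ ‖χ x‖ < 1/8} with hA
  have hAclosed : IsClosed A := by
    have : A = (fun x => ‖χ x‖) ⁻¹' (Ici (1/8)) := by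
      ext x; simp [hA, not_lt]
    rw [this]
    exact IsClosed.preimage (continuous_norm.comp χ.continuous) isClosed_Ici
  have hAm : MeasurableSet A := hAclosed.measurableSet
  set f : G → ℂ := fun x => ((AddCircle.toCircle (χ x) : Circle) : ℂ) with hf
  have hfc : Continuous f :=
    continuous_subtype_val.comp ((AddCircle.continuous_toCircle).comp χ.continuous)
  have hfint : Integrable f μ := by
    apply hfc.integrable_of_hasCompactSupport
    exact IsCompact.of_isClosed_subset isCompact_univ (isClosed_tsupport _) (subset_univ _)
  have hfre : Integrable (fun x => (f x).re) μ := hfint.re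
  have hint0 : ∫ x, (f x).re ∂μ = 0 := by
    have := integral_re (𝕜 := ℂ) hfint
    simp only [RCLike.re_to_complex] at this
    rw [this, integral_char_zero μ χ hχ, Complex.zero_re]
  set g : G → ℝ := fun x => A.indicator (fun _ => (-3/2 : ℝ)) x + 1/2 with hg
  have hgint : Integrable g μ := ((integrable_const _).indicator hAm).add (integrable_const _)
  have hmono : ∀ x, g x ≤ (f x).re := by
    intro x
    by_cases hx : x ∈ A
    · have h1 : g x = -1 := by simp [hg, hx]; ring
      rw [h1]
      have h2 : ‖f x‖ = 1 := Circle.norm_coe _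
      have h3 := Complex.abs_re_le_norm (f x)
      rw [h2] at h3
      have := neg_abs_le (f x).re
      linarith
    · have h1 : g x = 1/2 := by simp [hg, hx]
      rw [h1]
      exact re_toCircle_ge (not_not.mp (fun h => hx h))
  have hle : ∫ x, g x ∂μ ≤ 0 := hint0 ▸ integral_mono hgint hfre hmono
  have hgval : ∫ x, g x ∂μ = (μ A).toReal * (-3/2) + 1/2 := by
    rw [integral_add ((integrable_const _).indicator hAm) (integrable_const _),
      integral_indicator_const _ hAm, integral_const]
    simp [measure_univ, measureReal_def]
  have hAfin : μ A ≠ ⊤ := measure_ne_top μ A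
  have h13 : (1/3 : ℝ) ≤ (μ A).toReal := by
    rw [hgval] at hle
    linarith
  rw [← ENNReal.ofReal_toReal hAfin]
  exact ENNReal.ofReal_le_ofReal h13

lemma exists_bad_point {H : Type*} [AddCommGroup H] [TopologicalSpace H] [IsTopologicalAddGroup H]
    [CompactSpace H] [T2Space H] (χ : ℕ → ContinuousAddMonoidHom H Torus)
    (hne : ∀ k, ∃ g, χ k g ≠ 0) :
    ∃ x : H, {k | ¬ ‖χ k x‖ < 1/8}.Infinite := by
  borelize H
  have : Nonempty H := ⟨0⟩
  set μ : Measure H := Measure.addHaarMeasure (⊤ : TopologicalSpace.PositiveCompacts H) with hμ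
  have hprob : IsProbabilityMeasure μ := by
    constructor
    rw [← TopologicalSpace.PositiveCompacts.coe_top (α := H)]
    exact Measure.addHaarMeasure_self
  set A : ℕ → Set H := fun k => {x | ¬ ‖χ k x‖ < 1/8} with hA
  have hAm : ∀ k, MeasurableSet (A k) := by
    intro k
    have : A k = (fun x => ‖χ k x‖) ⁻¹' (Ici (1/8)) := by
      ext x; simp [hA, not_lt]
    rw [this]
    exact (IsClosed.preimage (continuous_norm.comp (χ k).continuous) isClosed_Ici).measurableSet
  have hAbig : ∀ k, ENNReal.ofReal (1/3) ≤ μ (A k) := fun k => measure_bad_ge μ (χ k) (hne k)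
  set U : ℕ → Set H := fun N => ⋃ k, ⋃ (_ : N ≤ k), A k with hU
  have hUm : ∀ N, MeasurableSet (U N) := fun N => MeasurableSet.iUnion fun k =>
    MeasurableSet.iUnion fun _ => hAm k
  have hUanti : Antitone U := by
    intro N M hNM x hx
    simp only [hU, mem_iUnion] at hx ⊢
    obtain ⟨k, hk, hxk⟩ := hx
    exact ⟨k, le_trans hNM hk, hxk⟩
  have htend := tendsto_measure_iInter_atTop (μ := μ) (fun N => (hUm N).nullMeasurableSet)
    hUanti ⟨0, measure_ne_top μ _⟩
  have hLbig : ENNReal.ofReal (1/3) ≤ μ (⋂ N, U N) := by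
    apply ge_of_tendsto htend
    apply Eventually.of_forall
    intro N
    exact le_trans (hAbig N) (measure_mono (by
      intro x hx
      simp only [hU, mem_iUnion]
      exact ⟨N, le_refl N, hx⟩))
  have hLne : (⋂ N, U N).Nonempty := by
    apply nonempty_of_measure_ne_zero (μ := μ)
    intro h0
    rw [h0] at hLbig
    simp at hLbig
  obtain ⟨x, hx⟩ := hLne
  refine ⟨x, ?_⟩
  intro hfin
  obtain ⟨n, hn⟩ := hfin.bddAbove
  have hxn := mem_iInter.mp hx (n+1)
  simp only [hU, mem_iUnion] at hxn
  obtain ⟨k, hk, hxk⟩ := hxn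
  have : k ≤ n := hn hxk
  omega

end Aux

/-- For a closed subgroup `F` of a compact Hausdorff abelian group `X` and a
countably infinite set `B` of characters: `F ⊆ C_B(X)` iff `F ⊆ ker φ` for all but
finitely many `φ ∈ B`. -/
theorem stmt17 {X : Type*} [AddCommGroup X] [TopologicalSpace X] [IsTopologicalAddGroup X]
    [CompactSpace X] [T2Space X] (F : AddSubgroup X) (hclosed : IsClosed (F : Set X))
    (B : Set (GChar X)) (hBcount : B.Countable) (hBinf : B.Infinite) :
    (F : Set X) ⊆ CB B ↔ {φ ∈ B | ¬ ∀ x ∈ F, φ x = 0}.Finite := by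
  constructor
  · intro hF
    by_contra hinf
    have hSinf : {φ ∈ B | ¬ ∀ x ∈ F, φ x = 0}.Infinite := hinf
    set S := {φ ∈ B | ¬ ∀ x ∈ F, φ x = 0} with hS
    have e := hSinf.natEmbedding
    haveI : CompactSpace ↥F := isCompact_iff_compactSpace.mp hclosed.isCompact
    set ι : ContinuousAddMonoidHom ↥F X :=
      ⟨F.subtype, continuous_subtype_val⟩ with hι
    set χ : ℕ → ContinuousAddMonoidHom ↥F Torus :=
      fun k => ((e k : GChar X)).comp ι with hχ
    have hne : ∀ k, ∃ g : ↥F, χ k g ≠ 0 := by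
      intro k
      have h2 := (e k).2.2
      push_neg at h2
      obtain ⟨x, hxF, hx0⟩ := h2
      exact ⟨⟨x, hxF⟩, hx0⟩
    obtain ⟨x, hxinf⟩ := exists_bad_point χ hne
    have hxCB : (x : X) ∈ CB B := hF x.2
    have hfin := hxCB (1/8) (by norm_num)
    have hsub : {k | ¬ ‖χ k x‖ < 1/8} ⊆
        (fun k => (e k : GChar X)) ⁻¹' {φ ∈ B | ¬ ‖φ (x : X)‖ < 1/8} := by
      intro k hk
      exact ⟨(e k).2.1, hk⟩
    have hinj : Function.Injective (fun k => (e k : GChar X)) := by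
      intro a b hab
      exact e.injective (Subtype.ext hab)
    have : {k | ¬ ‖χ k x‖ < 1/8}.Finite :=
      Set.Finite.subset (hfin.preimage hinj.injOn) hsub
    exact hxinf this
  · intro hfin x hxF
    intro ε hε
    apply hfin.subset
    intro φ hφ
    refine ⟨hφ.1, fun hall => hφ.2 ?_⟩
    rw [hall x hxF]
    simpa using hε
end

section
/- Let X be a compact metrizable abelian topological group with a translation-invariant metric d inducing its topology. Let H = ⋃_{n∈ω} F_n where each F_n is a closed subgroup of X and F_n ⊊ F_{n+1} ⊊ X for all n. Suppose y_n ∈ F_{n+1} \ F_n are chosen so that d(y_{n+1}, 0) ≤ d(y_n, F_n)/3 for all n, where d(y, F) = inf{d(y, z) : z ∈ F}. Then the series x = Σ_{k=0}^∞ y_k converges in X and x ∉ H. -/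
open Filter Topology

/-- Let `X` be a compact abelian group with a translation-invariant metric inducing
its topology, `H = ⋃ₙ Fₙ` with `Fₙ` closed subgroups, `Fₙ ⊊ Fₙ₊₁ ⊊ X`, and choose
`yₙ ∈ Fₙ₊₁ \ Fₙ` with `d(yₙ₊₁, 0) ≤ d(yₙ, Fₙ)/3`.  Then the series `x = Σₖ yₖ`
converges and `x ∉ H`. -/
theorem stmt18 {X : Type*} [AddCommGroup X] [MetricSpace X] [IsTopologicalAddGroup X]
    [CompactSpace X] (hinv : ∀ a b c : X, dist (a + c) (b + c) = dist a b)
    (F : ℕ → AddSubgroup X) (hclosed : ∀ n, IsClosed (F n : Set X))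
    (hlt : ∀ n, F n < F (n + 1)) (hne : ∀ n, F n ≠ ⊤)
    (y : ℕ → X) (hy1 : ∀ n, y n ∈ F (n + 1)) (hy2 : ∀ n, y n ∉ F n)
    (hy3 : ∀ n, dist (y (n + 1)) 0 ≤ Metric.infDist (y n) (F n : Set X) / 3) :
    ∃ x : X, Tendsto (fun N => ∑ k ∈ Finset.range N, y k) atTop (𝓝 x) ∧
      x ∉ ⋃ n, (F n : Set X) := by
  set S : ℕ → X := fun N => ∑ k ∈ Finset.range N, y k with hS
  set g : ℕ → ℝ := fun n => dist (y n) 0 with hg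
  have hstep : ∀ N, dist (S N) (S (N + 1)) = g N := by
    intro N
    have h1 : S (N + 1) = y N + S N := by
      simp [hS, Finset.sum_range_succ, add_comm]
    rw [h1]
    have := hinv 0 (y N) (S N)
    rw [zero_add] at this
    rw [this, dist_comm]
  have hgF : ∀ n, g (n + 1) ≤ g n / 3 := by
    intro n
    refine (hy3 n).trans ?_
    have := Metric.infDist_le_dist_of_mem (x := y n) (F n).zero_mem
    linarith
  have hgeo : ∀ n j, g (n + j) ≤ g n * (1 / 3) ^ j := by
    intro n j
    induction j with
    | zero => simp
    | succ j ih =>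
      have := hgF (n + j)
      have h3 : g n * (1/3)^(j+1) = (g n * (1/3)^j) / 3 := by ring
      rw [show n + (j + 1) = (n + j) + 1 from rfl]
      rw [h3]
      linarith
  have hcauchy : CauchySeq S := by
    apply cauchySeq_of_le_geometric (1/3 : ℝ) (g 0) (by norm_num)
    intro n
    rw [hstep]
    simpa using hgeo 0 n
  obtain ⟨x, hx⟩ := cauchySeq_tendsto_of_complete hcauchy
  refine ⟨x, hx, ?_⟩
  intro hmem
  obtain ⟨s, ⟨n, rfl⟩, hxn⟩ := hmem
  set r : ℝ := Metric.infDist (y n) (F n : Set X) with hr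
  have hrpos : 0 < r :=
    ((hclosed n).notMem_iff_infDist_pos ⟨0, (F n).zero_mem⟩).mp (hy2 n)
  -- tail bound: dist (S (n+1)) x ≤ g (n+1) / (1 - 1/3)
  have htail : dist (S (n + 1)) x ≤ g (n + 1) / (1 - 1/3) := by
    have htend : Tendsto (fun j => S (j + (n + 1))) atTop (𝓝 x) :=
      hx.comp (tendsto_add_atTop_nat (n + 1))
    have hb : ∀ j, dist (S (j + (n + 1))) (S (j + 1 + (n + 1))) ≤ g (n + 1) * (1/3) ^ j := by
      intro j
      have : j + 1 + (n + 1) = j + (n + 1) + 1 := by ring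
      rw [this, hstep]
      have := hgeo (n + 1) j
      rwa [add_comm (n+1) j] at this
    have := dist_le_of_le_geometric_of_tendsto₀ (1/3) (g (n+1)) (by norm_num) hb htend
    simpa using this
  have hgle : g (n + 1) ≤ r / 3 := hy3 n
  have htail2 : dist (S (n + 1)) x ≤ r / 2 := by
    refine htail.trans ?_
    rw [div_le_iff₀ (by norm_num)]
    linarith
  -- S n ∈ F n
  have hmono : Monotone F := monotone_nat_of_le_succ (fun k => (hlt k).le)
  have hSn : S n ∈ F n := by
    apply AddSubgroup.sum_mem
    intro k hk
    exact hmono (Finset.mem_range.mp hk) (hy1 k)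
  have hz : x - S n ∈ F n := AddSubgroup.sub_mem _ hxn hSn
  have hge : r ≤ dist (y n) (x - S n) := Metric.infDist_le_dist_of_mem hz
  have heq : dist (y n) (x - S n) = dist (S (n + 1)) x := by
    have := hinv (y n) (x - S n) (S n)
    rw [sub_add_cancel] at this
    rw [← this]
    congr 1
    simp [hS, Finset.sum_range_succ, add_comm]
  rw [heq] at hge
  linarith
end

section
/- Let X be a compact Hausdorff abelian topological group, N a closed subgroup of X, and H ≤ N a subgroup that is not closed in X, such that H = C_D(X) for some countably infinite set D ⊆ X̂. Then there exists a countably infinite set B ⊆ N̂ of characters of N such that H = C_B(N). -/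
open Filter Topology

/-- If `H ≤ N ≤ X` with `X` compact Hausdorff abelian, `N` a closed subgroup, `H`
not closed in `X`, and `H = C_D(X)` for a countably infinite set `D ⊆ X̂`, then
`H = C_B(N)` for some countably infinite set `B` of characters of `N`. -/
theorem stmt19 {X : Type*} [AddCommGroup X] [TopologicalSpace X] [IsTopologicalAddGroup X]
    [CompactSpace X] [T2Space X] (N : AddSubgroup X) (hNclosed : IsClosed (N : Set X))
    (H : AddSubgroup X) (hHN : H ≤ N) (hHnotclosed : ¬ IsClosed (H : Set X))
    (D : Set (GChar X)) (hDcount : D.Countable) (hDinf : D.Infinite)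
    (hD : CB D = (H : Set X)) :
    ∃ B : Set (GChar N), B.Countable ∧ B.Infinite ∧ CB B = {n : N | (n : X) ∈ H} := by
  classical
  set res : GChar X → GChar N := fun φ => φ.comp ⟨N.subtype, continuous_subtype_val⟩ with hres
  have hreseval : ∀ (φ : GChar X) (n : N), res φ n = φ (n : X) := fun φ n => rfl
  set Dinf : Set (GChar X) := {φ ∈ D | {φ' ∈ D | res φ' = res φ}.Infinite} with hDinfdef
  set Dfin : Set (GChar X) := D \ Dinf with hDfindef
  -- Lemma A : characters of the infinite fibers vanish on H
  have lemA : ∀ φ ∈ Dinf, ∀ x ∈ H, φ x = 0 := by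
    intro φ hφ x hx
    by_contra h0
    have hpos : 0 < ‖φ x‖ := norm_pos_iff.mpr h0
    have hxC : x ∈ CB D := by rw [hD]; exact hx
    have hfin := hxC ‖φ x‖ hpos
    refine hφ.2 (hfin.subset ?_)
    intro φ' hφ'
    have hval : φ' x = φ x := by
      have hxN : x ∈ N := hHN hx
      have := congrArg (fun ψ : GChar N => ψ ⟨x, hxN⟩) hφ'.2
      simpa [hreseval] using this
    exact ⟨hφ'.1, by rw [hval]; exact lt_irrefl _⟩
  -- Lemma B : Dfin is infinite (this is where non-closedness of H is used)
  have lemB : Dfin.Infinite := by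
    by_contra hni
    rw [Set.not_infinite] at hni
    have hfin := hni
    apply hHnotclosed
    have hHeq : (H : Set X) = (N : Set X) ∩ ⋂ φ ∈ Dinf, φ ⁻¹' {0} := by
      ext x
      constructor
      · intro hx
        refine ⟨hHN hx, ?_⟩
        simp only [Set.mem_iInter, Set.mem_preimage, Set.mem_singleton_iff]
        exact fun φ hφ => lemA φ hφ x hx
      · rintro ⟨hxN, hx0⟩
        simp only [Set.mem_iInter, Set.mem_preimage, Set.mem_singleton_iff] at hx0
        have : x ∈ CB D := by
          intro ε hε
          refine hfin.subset ?_
          intro φ hφ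
          refine ⟨hφ.1, fun hmem => hφ.2 ?_⟩
          rw [hx0 φ hmem]
          simpa using hε
        rwa [hD] at this
    rw [hHeq]
    exact hNclosed.inter (isClosed_biInter fun φ _ =>
      IsClosed.preimage φ.continuous isClosed_singleton)
  -- fibers over Dfin are finite
  have hfib : ∀ φ ∈ Dfin, {φ' ∈ D | res φ' = res φ}.Finite := by
    intro φ hφ
    by_contra hinf
    exact hφ.2 ⟨hφ.1, hinf⟩
  -- the image of Dfin is infinite
  have himg : (res '' Dfin).Infinite := by
    intro hfin
    apply lemB
    have : Dfin ⊆ ⋃ ψ ∈ res '' Dfin, {φ' ∈ D | res φ' = ψ} := by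
      intro φ hφ
      exact Set.mem_biUnion (Set.mem_image_of_mem res hφ) ⟨hφ.1, rfl⟩
    refine Set.Finite.subset (hfin.biUnion ?_) this
    rintro ψ ⟨φ, hφ, rfl⟩
    exact hfib φ hφ
  -- choose an injective sequence β in res '' Dfin
  set β : ℕ → GChar N := fun k => ((himg.natEmbedding) k : GChar N) with hβdef
  have hβinj : Function.Injective β := fun a b hab => by
    have := (himg.natEmbedding).injective (Subtype.ext hab)
    exact this
  have hβmem : ∀ k, β k ∈ res '' Dfin := fun k => ((himg.natEmbedding) k).2
  -- enumerate insert 0 (res '' Dinf)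
  have hRcount : (insert (0 : GChar N) (res '' Dinf)).Countable :=
    Set.Countable.insert _ ((hDcount.mono (Set.sep_subset _ _)).image res)
  obtain ⟨e, he⟩ := Set.Countable.exists_eq_range hRcount ⟨0, Set.mem_insert _ _⟩
  have hemem : ∀ j, e j ∈ insert (0 : GChar N) (res '' Dinf) := by
    intro j; rw [he]; exact Set.mem_range_self j
  -- e j vanishes at points of H ∩ N
  have heval0 : ∀ j (n : N), (n : X) ∈ H → e j n = 0 := by
    intro j n hn
    rcases hemem j with h0 | ⟨φ, hφ, hφe⟩
    · rw [h0]; rfl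
    · rw [← hφe, hreseval]
      exact lemA φ hφ _ hn
  -- the characterizing set B
  set B : Set (GChar N) :=
    (res '' Dfin) ∪ {χ | ∃ j k : ℕ, j ≤ k ∧ χ = e j + β k} with hBdef
  refine ⟨B, ?_, ?_, ?_⟩
  · -- countable
    refine Set.Countable.union ((hDcount.mono Set.diff_subset).image res) ?_
    have : {χ : GChar N | ∃ j k : ℕ, j ≤ k ∧ χ = e j + β k}
        = (fun p : ℕ × ℕ => e p.1 + β p.2) '' {p | p.1 ≤ p.2} := by
      ext χ
      constructor
      · rintro ⟨j, k, hjk, rfl⟩; exact ⟨(j, k), hjk, rfl⟩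
      · rintro ⟨⟨j, k⟩, hjk, rfl⟩; exact ⟨j, k, hjk, rfl⟩
    rw [this]
    exact (Set.to_countable _).image _
  · -- infinite
    exact himg.mono Set.subset_union_left
  · -- CB B = H viewed inside N
    ext n
    simp only [Set.mem_setOf_eq]
    constructor
    · -- n ∈ CB B → ↑n ∈ H
      intro hn
      -- β k ↑n → 0
      have hβsmall : ∀ ε > 0, {k : ℕ | ¬ ‖β k n‖ < ε}.Finite := by
        intro ε hε
        have hsub : β '' {k : ℕ | ¬ ‖β k n‖ < ε} ⊆ {χ ∈ B | ¬ ‖χ n‖ < ε} := by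
          rintro χ ⟨k, hk, rfl⟩
          exact ⟨Set.subset_union_left (hβmem k), hk⟩
        have := (hn ε hε).subset hsub
        exact Set.Finite.of_finite_image this (hβinj.injOn)
      -- each e j vanishes at n
      have he0 : ∀ j, e j n = 0 := by
        intro j
        rw [← norm_eq_zero]
        by_contra h0
        have hpos : 0 < ‖e j n‖ := lt_of_le_of_ne (norm_nonneg _) (Ne.symm h0)
        set ε := ‖e j n‖ / 2 with hεdef
        have hε : 0 < ε := by positivity
        have h1 : {k : ℕ | j ≤ k ∧ ¬ ‖(e j + β k) n‖ < ε}.Finite := by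
          have hsub : (fun k => e j + β k) '' {k : ℕ | j ≤ k ∧ ¬ ‖(e j + β k) n‖ < ε}
              ⊆ {χ ∈ B | ¬ ‖χ n‖ < ε} := by
            rintro χ ⟨k, hk, rfl⟩
            exact ⟨Or.inr ⟨j, k, hk.1, rfl⟩, hk.2⟩
          have hinj : Function.Injective (fun k => e j + β k) := by
            intro a b hab
            exact hβinj (by simpa using hab)
          exact Set.Finite.of_finite_image ((hn ε hε).subset hsub) hinj.injOn
        have h2 := hβsmall ε hε
        -- pick k large, beyond both finite sets and ≥ j
        obtain ⟨m, hm⟩ := (h1.union h2).bddAbove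
        set k := max (m + 1) j with hkdef
        have hkm : ¬ k ∈ {k : ℕ | j ≤ k ∧ ¬ ‖(e j + β k) n‖ < ε} ∪ {k : ℕ | ¬ ‖β k n‖ < ε} := by
          intro hkmem
          have := hm hkmem
          omega
        rw [Set.mem_union, not_or] at hkm
        have hjk : j ≤ k := le_max_right _ _
        have hβk : ‖β k n‖ < ε := by
          by_contra hc; exact hkm.2 hc
        have hsum : ‖(e j + β k) n‖ < ε := by
          by_contra hc; exact hkm.1 ⟨hjk, hc⟩
        have hple : ‖e j n‖ ≤ ‖(e j + β k) n‖ + ‖β k n‖ := by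
          have heq : e j n = (e j + β k) n + (-(β k n)) := by
            show e j n = (e j n + β k n) + (-(β k n)); abel
          calc ‖e j n‖ = ‖(e j + β k) n + (-(β k n))‖ := by rw [← heq]
            _ ≤ ‖(e j + β k) n‖ + ‖(-(β k n))‖ := norm_add_le _ _
            _ = ‖(e j + β k) n‖ + ‖β k n‖ := by rw [norm_neg]
        have : ‖e j n‖ < 2 * ε := by linarith
        rw [hεdef] at this
        linarith
      -- conclude ↑n ∈ H
      have : (n : X) ∈ CB D := by
        intro ε hε
        have hbadsub : {φ ∈ D | ¬ ‖φ (n : X)‖ < ε} ⊆ Dfin := by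
          intro φ hφ
          refine ⟨hφ.1, fun hmem => hφ.2 ?_⟩
          have hmemr : res φ ∈ Set.range e := by
            rw [← he]; exact Set.mem_insert_of_mem _ ⟨φ, hmem, rfl⟩
          obtain ⟨j, hj⟩ := hmemr
          have h0 : φ (n : X) = 0 := by
            rw [← hreseval φ n, ← hj, he0 j]
          rw [h0]
          simpa using hε
        have hM := hn ε hε
        have himg2 : (res '' {φ ∈ D | ¬ ‖φ (n : X)‖ < ε}).Finite := by
          refine hM.subset ?_
          rintro χ ⟨φ, hφ, rfl⟩
          refine ⟨Or.inl ⟨φ, hbadsub hφ, rfl⟩, ?_⟩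
          rw [hreseval]
          exact hφ.2
        have hfinU : (⋃ ψ ∈ res '' {φ ∈ D | ¬ ‖φ (n : X)‖ < ε},
            {φ' ∈ D | res φ' = ψ}).Finite := by
          refine himg2.biUnion ?_
          rintro ψ ⟨φ0, hφ0, rfl⟩
          exact hfib φ0 (hbadsub hφ0)
        refine hfinU.subset ?_
        intro φ hφ
        exact Set.mem_biUnion (Set.mem_image_of_mem res hφ) ⟨hφ.1, rfl⟩
      rwa [hD] at this
    · -- ↑n ∈ H → n ∈ CB B
      intro hn
      intro ε hε
      have hnC : (n : X) ∈ CB D := by rw [hD]; exact hn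
      have hS : {φ ∈ D | ¬ ‖φ (n : X)‖ < ε}.Finite := hnC ε hε
      have hK : {k : ℕ | ¬ ‖β k n‖ < ε}.Finite := by
        have hsub : β '' {k : ℕ | ¬ ‖β k n‖ < ε} ⊆ res '' {φ ∈ D | ¬ ‖φ (n : X)‖ < ε} := by
          rintro χ ⟨k, hk, rfl⟩
          obtain ⟨φ, hφ, hφk⟩ := hβmem k
          refine ⟨φ, ⟨hφ.1, ?_⟩, hφk⟩
          rw [← hreseval φ n, hφk]; exact hk
        exact Set.Finite.of_finite_image ((hS.image res).subset hsub) hβinj.injOn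
      refine Set.Finite.subset ((hS.image res).union
        (hK.biUnion (fun k _ => (Set.finite_Iic k).image (fun j => e j + β k)))) ?_
      rintro χ ⟨hχB, hχbad⟩
      rcases hχB with ⟨φ, hφ, rfl⟩ | ⟨j, k, hjk, rfl⟩
      · exact Or.inl ⟨φ, ⟨hφ.1, by rwa [hreseval φ n] at hχbad⟩, rfl⟩
      · have h0 : e j n = 0 := heval0 j n hn
        have hkbad : ¬ ‖β k n‖ < ε := by
          intro hlt
          apply hχbad
          show ‖(e j + β k) n‖ < ε
          have heq : (e j + β k) n = β k n := by
            show e j n + β k n = β k n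
            rw [h0, zero_add]
          rwa [heq]
        exact Or.inr (Set.mem_biUnion hkbad ⟨j, hjk, rfl⟩)
end
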